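/- Let n ≥ 1, a < b real, and let U : ℝ × [a,b] → (n×n complex matrices) be continuous and continuously differentiable in the first (parameter) variable s. For each s, let T(s; x, y) be the fundamental solution of the linear system, i.e. ∂_x T(s; x, y) = U(s,x) T(s; x, y) with T(s; y, y) = Id. Then the map s ↦ T(s; b, a) is differentiable and ∂_s T(s; b, a) = ∫_a^b T(s; b, x) (∂_s U)(s,x) T(s; x, a) dx. -/

import Mathlib

set_option autoImplicit false
set_option maxHeartbeats 1000000

open MeasureTheory Set Filter Topology

namespace MonodromyAux

@[reducible] noncomputable def matNR {n : ℕ} : NormedRing (Matrix (Fin n) (Fin n) ℂ) :=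
  { (Matrix.linftyOpNormedRing : NormedRing (Matrix (Fin n) (Fin n) ℂ)) with
    toPseudoMetricSpace :=
      (Matrix.linftyOpNormedRing :
        NormedRing (Matrix (Fin n) (Fin n) ℂ)).toPseudoMetricSpace.replaceUniformity rfl }
attribute [local instance] matNR

@[reducible] noncomputable def matNA {n : ℕ} : NormedAlgebra ℝ (Matrix (Fin n) (Fin n) ℂ) :=
  { Matrix.instAlgebra with
    norm_smul_le := (Matrix.linftyOpNormedAlgebra :
      NormedAlgebra ℝ (Matrix (Fin n) (Fin n) ℂ)).norm_smul_le }
attribute [local instance] matNA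

variable {n : ℕ}

noncomputable def entryCLM (i j : Fin n) : Matrix (Fin n) (Fin n) ℂ →L[ℝ] ℂ :=
  LinearMap.toContinuousLinearMap
    { toFun := fun A => A i j
      map_add' := fun _ _ => rfl
      map_smul' := fun _ _ => rfl }

@[simp] lemma entryCLM_apply (i j : Fin n) (A : Matrix (Fin n) (Fin n) ℂ) :
    entryCLM i j A = A i j := rfl

noncomputable def stdCLM (i j : Fin n) : ℂ →L[ℝ] Matrix (Fin n) (Fin n) ℂ :=
  LinearMap.toContinuousLinearMap
    { toFun := fun c => Matrix.single i j c
      map_add' := fun c d => by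
        ext i' j'
        simp only [Matrix.single, Matrix.of_apply, Matrix.add_apply]
        split_ifs <;> simp
      map_smul' := fun c d => by
        ext i' j'
        simp only [Matrix.single, Matrix.of_apply, Matrix.smul_apply, RingHom.id_apply]
        split_ifs <;> simp }

@[simp] lemma stdCLM_apply (i j : Fin n) (c : ℂ) :
    stdCLM i j c = Matrix.single i j c := rfl

theorem hasDerivWithinAt_matrix {f : ℝ → Matrix (Fin n) (Fin n) ℂ}
    {f' : Matrix (Fin n) (Fin n) ℂ} {s : Set ℝ} {x : ℝ}
    (h : ∀ i j, HasDerivWithinAt (fun t => f t i j) (f' i j) s x) :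
    HasDerivWithinAt f f' s x := by
  have hf : f = fun t => ∑ i : Fin n, ∑ j : Fin n, stdCLM i j (f t i j) := by
    funext t
    simpa using Matrix.matrix_eq_sum_single (f t)
  have hf' : f' = ∑ i : Fin n, ∑ j : Fin n, stdCLM i j (f' i j) := by
    simpa using Matrix.matrix_eq_sum_single f'
  rw [hf, hf']
  exact HasDerivWithinAt.fun_sum fun i _ => HasDerivWithinAt.fun_sum fun j _ =>
    (stdCLM i j).hasFDerivAt.comp_hasDerivWithinAt x (h i j)

theorem hasDerivAt_matrix {f : ℝ → Matrix (Fin n) (Fin n) ℂ}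
    {f' : Matrix (Fin n) (Fin n) ℂ} {x : ℝ}
    (h : ∀ i j, HasDerivAt (fun t => f t i j) (f' i j) x) :
    HasDerivAt f f' x := by
  rw [← hasDerivWithinAt_univ]
  exact hasDerivWithinAt_matrix fun i j => (h i j).hasDerivWithinAt

theorem ode_norm_le {A f : ℝ → Matrix (Fin n) (Fin n) ℂ} {a b M : ℝ}
    (hf : ∀ x ∈ Icc a b, HasDerivWithinAt f (A x * f x) (Icc a b) x)
    (hM : ∀ x ∈ Icc a b, ‖A x‖ ≤ M) :
    ∀ x ∈ Icc a b, ‖f x‖ ≤ ‖f a‖ * Real.exp (M * (x - a)) := by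
  intro x hx
  have hcont : ContinuousOn f (Icc a b) := fun t ht => (hf t ht).continuousWithinAt
  have key := norm_le_gronwallBound_of_norm_deriv_right_le (f' := fun t => A t * f t)
    (δ := ‖f a‖) (K := M) (ε := 0) hcont
    (fun t ht => (hf t (Ico_subset_Icc_self ht)).mono_of_mem_nhdsWithin
      (Icc_mem_nhdsGE_of_mem ht))
    le_rfl
    (fun t ht => by
      have h1 : ‖A t * f t‖ ≤ ‖A t‖ * ‖f t‖ := norm_mul_le _ _
      have h2 : ‖A t‖ * ‖f t‖ ≤ M * ‖f t‖ :=
        mul_le_mul_of_nonneg_right (hM t (Ico_subset_Icc_self ht)) (norm_nonneg _)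
      linarith)
  simpa [gronwallBound_ε0] using key x hx

theorem ode_zero_forward {A f : ℝ → Matrix (Fin n) (Fin n) ℂ} {a b M c : ℝ}
    (hf : ∀ x ∈ Icc a b, HasDerivWithinAt f (A x * f x) (Icc a b) x)
    (hM : ∀ x ∈ Icc a b, ‖A x‖ ≤ M)
    (hc : c ∈ Icc a b) (hfc : f c = 0) :
    ∀ x ∈ Icc c b, f x = 0 := by
  intro x hx
  have hsub : Icc c b ⊆ Icc a b := Icc_subset_Icc hc.1 le_rfl
  have hf' : ∀ t ∈ Icc c b, HasDerivWithinAt f (A t * f t) (Icc c b) t :=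
    fun t ht => (hf t (hsub ht)).mono hsub
  have := ode_norm_le (a := c) (b := b) hf' (fun t ht => hM t (hsub ht)) x hx
  rw [hfc] at this
  simp only [norm_zero, zero_mul] at this
  exact norm_le_zero_iff.mp this

theorem ode_zero {A f : ℝ → Matrix (Fin n) (Fin n) ℂ} {a b M c : ℝ}
    (hf : ∀ x ∈ Icc a b, HasDerivWithinAt f (A x * f x) (Icc a b) x)
    (hM : ∀ x ∈ Icc a b, ‖A x‖ ≤ M)
    (hc : c ∈ Icc a b) (hfc : f c = 0) :
    ∀ x ∈ Icc a b, f x = 0 := by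
  intro x hx
  rcases le_total c x with hcx | hxc
  · exact ode_zero_forward hf hM hc hfc x ⟨hcx, hx.2⟩
  · set r : ℝ → ℝ := fun t => a + b - t with hr
    have hrmem : ∀ t ∈ Icc a b, r t ∈ Icc a b := fun t ht =>
      ⟨by simp [hr]; linarith [ht.2], by simp [hr]; linarith [ht.1]⟩
    have hrd : ∀ t : ℝ, HasDerivAt r (-1) t := fun t => by
      simpa using (hasDerivAt_id t).const_sub (a + b)
    have hg : ∀ t ∈ Icc a b,
        HasDerivWithinAt (fun t' => f (r t')) ((-(A (r t))) * f (r t)) (Icc a b) t := by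
      intro t ht
      have comp := HasDerivWithinAt.scomp (𝕜 := ℝ) t (hf (r t) (hrmem t ht))
        ((hrd t).hasDerivWithinAt) (fun u hu => hrmem u hu)
      simpa [neg_smul, neg_mul, Function.comp_def] using comp
    have hMg : ∀ t ∈ Icc a b, ‖-(A (r t))‖ ≤ M := fun t ht => by
      simpa using hM (r t) (hrmem t ht)
    have hrc : r c ∈ Icc a b := hrmem c hc
    have hgc : f (r (r c)) = 0 := by
      have : r (r c) = c := by simp [hr]
      rw [this]; exact hfc
    have := ode_zero_forward (f := fun t => f (r t)) hg hMg hrc hgc (r x)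
      ⟨by simp [hr]; linarith, (hrmem x hx).2⟩
    have hrr : r (r x) = x := by simp [hr]
    simpa only [hrr] using this

end MonodromyAux

open MonodromyAux

section Main
attribute [local instance] MonodromyAux.matNR MonodromyAux.matNA

theorem monodromy_variation
    (n : ℕ) (hn : 1 ≤ n) (a b : ℝ) (hab : a < b)
    (U Us : ℝ → ℝ → Matrix (Fin n) (Fin n) ℂ)
    (hUcont : ContinuousOn (fun p : ℝ × ℝ => U p.1 p.2) (Set.univ ×ˢ Set.Icc a b))
    (hUs : ∀ s : ℝ, ∀ x ∈ Set.Icc a b, ∀ i j : Fin n,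
      HasDerivAt (fun s' => U s' x i j) (Us s x i j) s)
    (hUscont : ContinuousOn (fun p : ℝ × ℝ => Us p.1 p.2) (Set.univ ×ˢ Set.Icc a b))
    (T : ℝ → ℝ → ℝ → Matrix (Fin n) (Fin n) ℂ)
    (hTinit : ∀ s : ℝ, ∀ y ∈ Set.Icc a b, T s y y = 1)
    (hTderiv : ∀ s : ℝ, ∀ y ∈ Set.Icc a b, ∀ x ∈ Set.Icc a b, ∀ i j : Fin n,
      HasDerivWithinAt (fun x' => T s x' y i j) ((U s x * T s x y) i j) (Set.Icc a b) x) :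
    ∀ s : ℝ, ∀ i j : Fin n,
      HasDerivAt (fun s' => T s' b a i j)
        (∫ x in a..b, (T s b x * Us s x * T s x a) i j) s := by
  intro s₀ i j
  have hab' : a ≤ b := hab.le
  have haI : a ∈ Icc a b := ⟨le_rfl, hab'⟩
  have hbI : b ∈ Icc a b := ⟨hab', le_rfl⟩
  -- continuity in x of U and Us for each fixed s
  have hUc : ∀ s, ContinuousOn (fun x => U s x) (Icc a b) := fun s =>
    hUcont.comp ((continuous_const.prodMk continuous_id).continuousOn)
      (fun x hx => ⟨trivial, hx⟩)
  have hUsc : ∀ s, ContinuousOn (fun x => Us s x) (Icc a b) := fun s =>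
    hUscont.comp ((continuous_const.prodMk continuous_id).continuousOn)
      (fun x hx => ⟨trivial, hx⟩)
  -- matrix-valued ODE for T
  have hT' : ∀ s : ℝ, ∀ y ∈ Icc a b, ∀ x ∈ Icc a b,
      HasDerivWithinAt (fun x' => T s x' y) (U s x * T s x y) (Icc a b) x :=
    fun s y hy x hx => hasDerivWithinAt_matrix (fun i' j' => hTderiv s y hy x hx i' j')
  have hTcont : ∀ s : ℝ, ∀ y ∈ Icc a b, ContinuousOn (fun x => T s x y) (Icc a b) :=
    fun s y hy x hx => (hT' s y hy x hx).continuousWithinAt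
  -- bound on U s for each s
  have hMs : ∀ s : ℝ, ∃ M, ∀ x ∈ Icc a b, ‖U s x‖ ≤ M := fun s =>
    isCompact_Icc.exists_bound_of_continuousOn (hUc s)
  -- uniqueness for the ODE
  have huniq : ∀ s : ℝ, ∀ f g : ℝ → Matrix (Fin n) (Fin n) ℂ, ∀ c ∈ Icc a b,
      (∀ x ∈ Icc a b, HasDerivWithinAt f (U s x * f x) (Icc a b) x) →
      (∀ x ∈ Icc a b, HasDerivWithinAt g (U s x * g x) (Icc a b) x) →
      f c = g c → ∀ x ∈ Icc a b, f x = g x := by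
    intro s f g c hc hfd hgd hfg x hx
    obtain ⟨M, hM⟩ := hMs s
    have hd : ∀ x' ∈ Icc a b, HasDerivWithinAt (fun t => f t - g t)
        (U s x' * (f x' - g x')) (Icc a b) x' := fun x' hx' => by
      simpa [mul_sub] using (hfd x' hx').fun_sub (hgd x' hx')
    have := ode_zero hd hM hc (by simp [hfg]) x hx
    exact sub_eq_zero.mp this
  -- cocycle property
  have hco : ∀ s : ℝ, ∀ x ∈ Icc a b, ∀ y ∈ Icc a b, ∀ z ∈ Icc a b,
      T s x y * T s y z = T s x z := by
    intro s x hx y hy z hz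
    refine huniq s (fun x' => T s x' y * T s y z) (fun x' => T s x' z) y hy
      (fun x' hx' => by simpa [mul_assoc] using (hT' s y hy x' hx').mul_const (T s y z))
      (fun x' hx' => hT' s z hz x' hx')
      (by show T s y y * T s y z = T s y z; rw [hTinit s y hy, one_mul]) x hx
  have hunit : ∀ s : ℝ, ∀ x ∈ Icc a b, ∀ y ∈ Icc a b, T s x y * T s y x = 1 := by
    intro s x hx y hy
    rw [hco s x hx y hy x hx, hTinit s x hx]
  have hinvval : ∀ s : ℝ, ∀ x' ∈ Icc a b, Ring.inverse (T s x' a) = T s a x' :=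
    fun s x' hx' => Ring.inverse_unit
      ⟨T s x' a, T s a x', hunit s x' hx' a haI, hunit s a haI x' hx'⟩
  -- derivative of T in the second variable
  have hTsnd : ∀ s : ℝ, ∀ c ∈ Icc a b, ∀ x ∈ Icc a b,
      HasDerivWithinAt (fun x' => T s c x') (-(T s c x * U s x)) (Icc a b) x := by
    intro s c hc x hx
    set u : (Matrix (Fin n) (Fin n) ℂ)ˣ :=
      ⟨T s x a, T s a x, hunit s x hx a haI, hunit s a haI x hx⟩ with hu
    have hinv : HasDerivWithinAt (fun x' => Ring.inverse (T s x' a))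
        ((-ContinuousLinearMap.mulLeftRight ℝ _ (↑u⁻¹) (↑u⁻¹)) (U s x * T s x a))
        (Icc a b) x :=
      (hasFDerivAt_ringInverse (𝕜 := ℝ) u).comp_hasDerivWithinAt_of_eq x (hT' s a haI x hx)
        (by rw [hu])
    have hconst := hinv.const_mul (T s c a)
    have hval : T s c a *
        ((-ContinuousLinearMap.mulLeftRight ℝ _ (↑u⁻¹) (↑u⁻¹)) (U s x * T s x a))
        = -(T s c x * U s x) := by
      simp only [ContinuousLinearMap.neg_apply, ContinuousLinearMap.mulLeftRight_apply]
      show T s c a * -(T s a x * (U s x * T s x a) * T s a x) = -(T s c x * U s x)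
      rw [mul_neg, mul_assoc (T s a x), mul_assoc (U s x), hunit s x hx a haI, mul_one,
        ← mul_assoc, hco s c hc a haI x hx]
    rw [hval] at hconst
    exact hconst.congr
      (fun x' hx' => by rw [hinvval s x' hx', hco s c hc a haI x' hx'])
      (by rw [hinvval s x hx, hco s c hc a haI x hx])
  have hTsndcont : ∀ s : ℝ, ∀ c ∈ Icc a b, ContinuousOn (fun x => T s c x) (Icc a b) :=
    fun s c hc x hx => (hTsnd s c hc x hx).continuousWithinAt
  -- Duhamel formula
  have duh : ∀ s' s : ℝ, ∀ x ∈ Icc a b,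
      T s' x a - T s x a = ∫ u in a..x, T s x u * (U s' u - U s u) * T s' u a := by
    intro s' s x hx
    have hsub : Icc a x ⊆ Icc a b := Icc_subset_Icc le_rfl hx.2
    have hderiv : ∀ u ∈ Ioo a x, HasDerivAt (fun u' => T s x u' * T s' u' a)
        (T s x u * (U s' u - U s u) * T s' u a) u := by
      intro u hu
      have huI : u ∈ Icc a b := ⟨hu.1.le, hu.2.le.trans hx.2⟩
      have hnb : Icc a b ∈ nhds u := Icc_mem_nhds hu.1 (lt_of_lt_of_le hu.2 hx.2)
      have h1 := ((hTsnd s x hx u huI).mul (hT' s' a haI u huI)).hasDerivAt hnb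
      have h3 : (-(T s x u * U s u)) * T s' u a + T s x u * (U s' u * T s' u a)
          = T s x u * (U s' u - U s u) * T s' u a := by noncomm_ring
      rwa [h3] at h1
    have hgc : ContinuousOn (fun u' => T s x u' * T s' u' a) (Icc a x) :=
      ((hTsndcont s x hx).mono hsub).mul ((hTcont s' a haI).mono hsub)
    have hint : IntervalIntegrable (fun u => T s x u * (U s' u - U s u) * T s' u a)
        volume a x := by
      apply ContinuousOn.intervalIntegrable
      rw [uIcc_of_le hx.1]
      exact (((hTsndcont s x hx).mono hsub).mul (((hUc s').sub (hUc s)).mono hsub)).mul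
        ((hTcont s' a haI).mono hsub)
    have hftc := intervalIntegral.integral_eq_sub_of_hasDerivAt_of_le hx.1 hgc hderiv hint
    rw [hftc]
    show T s' x a - T s x a = T s x x * T s' x a - T s x a * T s' a a
    rw [hTinit s x hx, hTinit s' a haI, one_mul, mul_one]
  -- bounds on the compact parameter interval J = [s₀-1, s₀+1]
  have hJ : s₀ ∈ Icc (s₀ - 1) (s₀ + 1) := by constructor <;> linarith
  obtain ⟨M0, hM0⟩ := (isCompact_Icc.prod isCompact_Icc :
      IsCompact (Icc (s₀-1) (s₀+1) ×ˢ Icc a b)).exists_bound_of_continuousOn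
    (hUcont.mono (prod_mono (subset_univ _) (subset_refl _)))
  obtain ⟨M1, hM1⟩ := (isCompact_Icc.prod isCompact_Icc :
      IsCompact (Icc (s₀-1) (s₀+1) ×ˢ Icc a b)).exists_bound_of_continuousOn
    (hUscont.mono (prod_mono (subset_univ _) (subset_refl _)))
  set M := max (max M0 M1) 0 with hMdef
  have hMnonneg : 0 ≤ M := le_max_right _ _
  have hMU : ∀ s ∈ Icc (s₀-1) (s₀+1), ∀ x ∈ Icc a b, ‖U s x‖ ≤ M := fun s hs x hx =>
    le_trans (hM0 (s, x) ⟨hs, hx⟩) (le_max_of_le_left (le_max_left _ _))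
  have hMUs : ∀ s ∈ Icc (s₀-1) (s₀+1), ∀ x ∈ Icc a b, ‖Us s x‖ ≤ M := fun s hs x hx =>
    le_trans (hM1 (s, x) ⟨hs, hx⟩) (le_max_of_le_left (le_max_right _ _))
  -- uniform bound on T s x a
  set C := ‖(1 : Matrix (Fin n) (Fin n) ℂ)‖ * Real.exp (M * (b - a)) with hCdef
  have hCnonneg : 0 ≤ C := mul_nonneg (norm_nonneg _) (Real.exp_pos _).le
  have hTbound : ∀ s ∈ Icc (s₀-1) (s₀+1), ∀ x ∈ Icc a b, ‖T s x a‖ ≤ C := by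
    intro s hs x hx
    have h := ode_norm_le (A := U s) (f := fun x' => T s x' a)
      (fun x' hx' => hT' s a haI x' hx') (fun x' hx' => hMU s hs x' hx') x hx
    have h : ‖T s x a‖ ≤ ‖T s a a‖ * Real.exp (M * (x - a)) := h
    rw [hTinit s a haI] at h
    refine h.trans ?_
    exact mul_le_mul_of_nonneg_left (Real.exp_le_exp.2
      (mul_le_mul_of_nonneg_left (by linarith [hx.2] : x - a ≤ b - a) hMnonneg))
      (norm_nonneg _)
  -- bound on T s₀ x u
  obtain ⟨C₂, hC₂⟩ := isCompact_Icc.exists_bound_of_continuousOn (hTsndcont s₀ a haI)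
  set C₂' := max C₂ 0 with hC₂def
  have hC₂nonneg : 0 ≤ C₂' := le_max_right _ _
  have hTxu : ∀ x ∈ Icc a b, ∀ u ∈ Icc a b, ‖T s₀ x u‖ ≤ C * C₂' := by
    intro x hx u hu
    rw [← hco s₀ x hx a haI u hu]
    exact (norm_mul_le _ _).trans (mul_le_mul (hTbound s₀ hJ x hx)
      ((hC₂ u hu).trans (le_max_left _ _)) (norm_nonneg _) hCnonneg)
  -- Lipschitz bound on U in s
  have hUmatderiv : ∀ σ : ℝ, ∀ x ∈ Icc a b, HasDerivAt (fun s' => U s' x) (Us σ x) σ :=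
    fun σ x hx => hasDerivAt_matrix (fun i' j' => hUs σ x hx i' j')
  have hLip : ∀ s ∈ Icc (s₀-1) (s₀+1), ∀ x ∈ Icc a b, ‖U s x - U s₀ x‖ ≤ M * |s - s₀| := by
    intro s hs x hx
    have h := Convex.norm_image_sub_le_of_norm_hasDerivWithin_le
      (f := fun s' => U s' x) (f' := fun σ => Us σ x)
      (fun σ _ => (hUmatderiv σ x hx).hasDerivWithinAt)
      (fun σ hσ => hMUs σ hσ x hx) (convex_Icc _ _) hJ hs
    simpa [Real.norm_eq_abs] using h
  -- product bound
  have hprod : ∀ s ∈ Icc (s₀-1) (s₀+1), ∀ x ∈ Icc a b, ∀ u ∈ Icc a b,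
      ‖T s₀ x u * (U s u - U s₀ u) * T s u a‖ ≤ (C * C₂') * (M * |s - s₀|) * C := by
    intro s hs x hx u hu
    calc ‖T s₀ x u * (U s u - U s₀ u) * T s u a‖
        ≤ ‖T s₀ x u * (U s u - U s₀ u)‖ * ‖T s u a‖ := norm_mul_le _ _
      _ ≤ (‖T s₀ x u‖ * ‖U s u - U s₀ u‖) * ‖T s u a‖ :=
          mul_le_mul_of_nonneg_right (norm_mul_le _ _) (norm_nonneg _)
      _ ≤ ((C * C₂') * (M * |s - s₀|)) * C := by
          apply mul_le_mul _ (hTbound s hs u hu) (norm_nonneg _)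
            (by positivity)
          exact mul_le_mul (hTxu x hx u hu) (hLip s hs u hu) (norm_nonneg _)
            (by positivity)
  -- difference bound for T in s
  have hTdiff : ∀ s ∈ Icc (s₀-1) (s₀+1), ∀ x ∈ Icc a b,
      ‖T s x a - T s₀ x a‖ ≤ (C * C₂') * (M * |s - s₀|) * C * (b - a) := by
    intro s hs x hx
    rw [duh s s₀ x hx]
    have hbnd : ∀ u ∈ Set.uIoc a x, ‖T s₀ x u * (U s u - U s₀ u) * T s u a‖
        ≤ (C * C₂') * (M * |s - s₀|) * C := by
      intro u hu
      rw [uIoc_of_le hx.1] at hu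
      exact hprod s hs x hx u ⟨hu.1.le, hu.2.trans hx.2⟩
    refine (intervalIntegral.norm_integral_le_of_norm_le_const hbnd).trans ?_
    have hxa : |x - a| ≤ b - a := by
      rw [abs_of_nonneg (by linarith [hx.1])]; linarith [hx.2]
    exact mul_le_mul_of_nonneg_left hxa (by positivity)
  -- the limiting integrand and the family
  set Φ : ℝ → Matrix (Fin n) (Fin n) ℂ := fun x => T s₀ b x * Us s₀ x * T s₀ x a with hΦ
  have hΦcont : ContinuousOn Φ (Icc a b) :=
    ((hTsndcont s₀ b hbI).mul (hUsc s₀)).mul (hTcont s₀ a haI)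
  have hΦint : IntervalIntegrable Φ volume a b := by
    apply ContinuousOn.intervalIntegrable
    rwa [uIcc_of_le hab']
  set F : ℝ → ℝ → Matrix (Fin n) (Fin n) ℂ :=
    fun s x => (s - s₀)⁻¹ • (T s₀ b x * (U s x - U s₀ x) * T s x a) with hFdef
  have hFcont : ∀ s, ContinuousOn (F s) (Icc a b) := fun s =>
    (((hTsndcont s₀ b hbI).mul ((hUc s).sub (hUc s₀))).mul (hTcont s a haI)).fun_const_smul _
  have hIoc : Set.uIoc a b = Ioc a b := uIoc_of_le hab'
  -- dominated convergence
  have key : Tendsto (fun s => ∫ x in a..b, F s x) (𝓝[≠] s₀) (𝓝 (∫ x in a..b, Φ x)) := by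
    apply intervalIntegral.tendsto_integral_filter_of_dominated_convergence
      (bound := fun _ => (C * C₂') * M * C)
    · exact Eventually.of_forall fun s =>
        ((hFcont s).mono (by rw [hIoc]; exact Ioc_subset_Icc_self)).aestronglyMeasurable
          measurableSet_uIoc
    · have hJev : ∀ᶠ s in 𝓝[≠] s₀, s ∈ Icc (s₀-1) (s₀+1) ∧ s ≠ s₀ := by
        filter_upwards [nhdsWithin_le_nhds
            (Icc_mem_nhds (by linarith : s₀ - 1 < s₀) (by linarith : s₀ < s₀ + 1)),
          self_mem_nhdsWithin] with s h1 h2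
        exact ⟨h1, h2⟩
      filter_upwards [hJev] with s hs
      refine Eventually.of_forall fun x hx => ?_
      have hxI : x ∈ Icc a b := by rw [hIoc] at hx; exact Ioc_subset_Icc_self hx
      have hdne : |s - s₀| ≠ 0 := by
        simp only [ne_eq, abs_eq_zero, sub_eq_zero]; exact hs.2
      have : ‖F s x‖ = |s - s₀|⁻¹ * ‖T s₀ b x * (U s x - U s₀ x) * T s x a‖ := by
        rw [hFdef]; simp [norm_smul, abs_inv]
      rw [this]
      calc |s - s₀|⁻¹ * ‖T s₀ b x * (U s x - U s₀ x) * T s x a‖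
          ≤ |s - s₀|⁻¹ * ((C * C₂') * (M * |s - s₀|) * C) :=
            mul_le_mul_of_nonneg_left (hprod s hs.1 b hbI x hxI)
              (inv_nonneg.2 (abs_nonneg _))
        _ = (C * C₂') * M * C := by field_simp
    · exact intervalIntegrable_const
    · refine Eventually.of_forall fun x hx => ?_
      have hxI : x ∈ Icc a b := by rw [hIoc] at hx; exact Ioc_subset_Icc_self hx
      have heq : ∀ s, F s x = T s₀ b x * ((s - s₀)⁻¹ • (U s x - U s₀ x)) * T s x a := by
        intro s
        rw [hFdef]
        simp only [smul_mul_assoc, mul_smul_comm]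
      have t1 : Tendsto (fun s => (s - s₀)⁻¹ • (U s x - U s₀ x)) (𝓝[≠] s₀)
          (𝓝 (Us s₀ x)) := by
        have h := hasDerivAt_iff_tendsto_slope.mp (hUmatderiv s₀ x hxI)
        exact h.congr fun s => by rw [slope_def_module]
      have t2 : Tendsto (fun s => T s x a) (𝓝[≠] s₀) (𝓝 (T s₀ x a)) := by
        rw [← tendsto_sub_nhds_zero_iff]
        apply squeeze_zero_norm'
          (a := fun s => (C * C₂') * (M * |s - s₀|) * C * (b - a))
        · filter_upwards [nhdsWithin_le_nhds
            (Icc_mem_nhds (by linarith : s₀ - 1 < s₀) (by linarith : s₀ < s₀ + 1))] with s hs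
          exact hTdiff s hs x hxI
        · have h0 : Tendsto (fun s : ℝ => s - s₀) (𝓝 s₀) (𝓝 0) :=
            tendsto_sub_nhds_zero_iff.mpr tendsto_id
          have habs : Tendsto (fun s : ℝ => |s - s₀|) (𝓝[≠] s₀) (𝓝 0) := by
            apply Tendsto.mono_left _ nhdsWithin_le_nhds
            simpa using h0.abs
          have := (((habs.const_mul M).const_mul (C * C₂')).mul_const C).mul_const (b - a)
          simpa using this
      rw [show (fun s => F s x)
          = fun s => T s₀ b x * ((s - s₀)⁻¹ • (U s x - U s₀ x)) * T s x a from funext heq]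
      exact (tendsto_const_nhds.mul t1).mul t2
  -- slope representation
  have hslope : ∀ s, slope (fun s' => T s' b a) s₀ s = ∫ x in a..b, F s x := by
    intro s
    rw [slope_def_module, duh s s₀ b hbI, ← intervalIntegral.integral_smul]
  have HD : HasDerivAt (fun s' => T s' b a) (∫ x in a..b, Φ x) s₀ := by
    rw [hasDerivAt_iff_tendsto_slope]
    rw [show slope (fun s' => T s' b a) s₀ = fun s => ∫ x in a..b, F s x from funext hslope]
    exact key
  have hcomp := (entryCLM i j).hasFDerivAt.comp_hasDerivAt s₀ HD
  have hint : entryCLM i j (∫ x in a..b, Φ x) = ∫ x in a..b, (Φ x) i j := by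
    rw [← ContinuousLinearMap.intervalIntegral_comp_comm _ hΦint]
    simp
  rw [hint] at hcomp
  simpa [hΦ, Function.comp_def] using hcomp

end Main
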